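/- For all integers n ≥ k ≥ 0, the (q,r)-Whitney-Lah numbers have the explicit formula L_{m,r}[n,k]_q = (1/([k]_{q^m}! · [m]_q^k)) · Σ_{j=0}^{k} (−1)^{k−j} q^{m·binom(k−j,2)} [k choose j]_{q^m} · ∏_{i=0}^{n−1} [2r+jm+im]_q. -/

import Mathlib

open Finset

/-- The `q`-integer `[s]_q = (q^s - 1)/(q - 1)` for an integer `s`. -/
noncomputable def qint (q : ℝ) (s : ℤ) : ℝ := (q ^ s - 1) / (q - 1)

/-- The `q`-factorial `[n]_q! = ∏_{i=1}^n [i]_q`. -/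
noncomputable def qfact (q : ℝ) : ℕ → ℝ
  | 0 => 1
  | n + 1 => qfact q n * qint q (n + 1)

/-- The `q`-binomial coefficient `[k choose j]_q`. -/
noncomputable def qbinom (q : ℝ) (k j : ℕ) : ℝ := qfact q k / (qfact q j * qfact q (k - j))

/-- The `(q,r)`-Whitney-Lah numbers `L_{m,r}[n,k]_q`, defined by `L[0,0] = 1`,
`L[n,k] = 0` for `k > n`, and the triangular recurrence
`L[n,k] = q^(2r+m(k-1)+m(n-1)) L[n-1,k-1] + [2r+km+(n-1)m]_q L[n-1,k]`. -/
noncomputable def qLah (q : ℝ) (m r : ℕ) : ℕ → ℕ → ℝ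
  | 0, 0 => 1
  | 0, _ + 1 => 0
  | n + 1, 0 => qint q (2 * r + n * m) * qLah q m r n 0
  | n + 1, k + 1 =>
      q ^ (2 * r + m * k + m * n) * qLah q m r n k
        + qint q (2 * r + (k + 1) * m + n * m) * qLah q m r n (k + 1)

noncomputable def qintN (q : ℝ) (a : ℕ) : ℝ := (q ^ a - 1) / (q - 1)

lemma qint_eq_qintN (q : ℝ) (z : ℤ) (a : ℕ) (h : z = (a : ℤ)) : qint q z = qintN q a := by
  subst h; simp [qint, qintN]

lemma qfact_succ (q : ℝ) (n : ℕ) : qfact q (n + 1) = qfact q n * qintN q (n + 1) := by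
  rw [qfact]; congr 1

def NPO (Q : ℝ) : Prop := ∀ s : ℕ, 0 < s → Q ^ s ≠ 1

lemma Qsub_ne (Q : ℝ) (HQ : NPO Q) (s : ℕ) (hs : 0 < s) : Q ^ s - 1 ≠ 0 :=
  sub_ne_zero.mpr (HQ s hs)

lemma Qone_ne (Q : ℝ) (HQ : NPO Q) : Q - 1 ≠ 0 := by
  have := HQ 1 one_pos; rw [pow_one] at this; exact sub_ne_zero.mpr this

lemma qintN_ne_zero (Q : ℝ) (HQ : NPO Q) (s : ℕ) (hs : 0 < s) : qintN Q s ≠ 0 :=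
  div_ne_zero (Qsub_ne Q HQ s hs) (Qone_ne Q HQ)

lemma qfact_ne_zero (Q : ℝ) (HQ : NPO Q) (k : ℕ) : qfact Q k ≠ 0 := by
  induction k with
  | zero => norm_num [qfact]
  | succ n ih =>
      rw [qfact_succ]
      exact mul_ne_zero ih (qintN_ne_zero Q HQ (n+1) (Nat.succ_pos n))

lemma qbinom_self (Q : ℝ) (HQ : NPO Q) (k : ℕ) : qbinom Q k k = 1 := by
  rw [qbinom, Nat.sub_self]
  rw [show qfact Q 0 = 1 from rfl, mul_one, div_self (qfact_ne_zero Q HQ k)]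

lemma qbinom_zero (Q : ℝ) (HQ : NPO Q) (k : ℕ) : qbinom Q k 0 = 1 := by
  rw [qbinom, Nat.sub_zero, show qfact Q 0 = 1 from rfl, one_mul,
    div_self (qfact_ne_zero Q HQ k)]

lemma qbinom_symm (Q : ℝ) (k j : ℕ) (h : j ≤ k) : qbinom Q k (k - j) = qbinom Q k j := by
  rw [qbinom, qbinom, Nat.sub_sub_self h, mul_comm]

lemma qintN_split (Q : ℝ) (HQ : NPO Q) (a b : ℕ) :
    qintN Q (a + b) = Q ^ a * qintN Q b + qintN Q a := by
  have h5 := Qone_ne Q HQ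
  simp only [qintN]
  field_simp
  ring

lemma qbinom_pascal (Q : ℝ) (HQ : NPO Q) (k j : ℕ) (h : j + 1 ≤ k) :
    qbinom Q (k+1) (j+1) = Q ^ (j+1) * qbinom Q k (j+1) + qbinom Q k j := by
  obtain ⟨d, rfl⟩ : ∃ d, k = j + 1 + d := ⟨k - (j+1), by omega⟩
  rw [qbinom, qbinom, qbinom,
    show j + 1 + d + 1 - (j + 1) = d + 1 by omega,
    show j + 1 + d - (j + 1) = d by omega,
    show j + 1 + d - j = d + 1 by omega,
    qfact_succ Q (j + 1 + d), qfact_succ Q j, qfact_succ Q d,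
    show j + 1 + d + 1 = (j+1) + (d+1) by ring, qintN_split Q HQ (j+1) (d+1)]
  have h1 := qfact_ne_zero Q HQ j
  have h2 := qfact_ne_zero Q HQ d
  have h3 := qintN_ne_zero Q HQ (j+1) (by omega)
  have h4 := qintN_ne_zero Q HQ (d+1) (by omega)
  field_simp

lemma gauss (Q : ℝ) (HQ : NPO Q) (t : ℕ) :
    ∑ i ∈ Finset.range (t+2), (-1:ℝ)^i * Q^(Nat.choose i 2) * qbinom Q (t+1) i = 0 := by
  have hchoose : ∀ i : ℕ, Nat.choose (i+1) 2 = Nat.choose i 2 + i := by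
    intro i
    simp [Nat.choose_succ_succ, Nat.choose_one_right, Nat.add_comm]
  have hstep : ∀ i ∈ Finset.range t,
      (-1:ℝ)^(i+1) * Q^(Nat.choose (i+1) 2) * qbinom Q (t+1) (i+1)
        = (fun i => (-1:ℝ)^i * Q^(Nat.choose i 2 + i) * qbinom Q t i) (i+1)
          - (fun i => (-1:ℝ)^i * Q^(Nat.choose i 2 + i) * qbinom Q t i) i := by
    intro i hi
    rw [Finset.mem_range] at hi
    simp only
    rw [qbinom_pascal Q HQ t i (by omega), hchoose i]
    simp only [pow_add, pow_succ]
    ring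
  rw [Finset.sum_range_succ, Finset.sum_range_succ']
  rw [Finset.sum_congr rfl hstep,
    Finset.sum_range_sub (fun i => (-1:ℝ)^i * Q^(Nat.choose i 2 + i) * qbinom Q t i)]
  rw [hchoose t]
  norm_num [qbinom_zero Q HQ, qbinom_self Q HQ, pow_add, pow_succ]

lemma qbinom_step (Q : ℝ) (HQ : NPO Q) (j d : ℕ) :
    qbinom Q (j+d+1) j * qintN Q (d+1) = qbinom Q (j+d) j * qintN Q (j+d+1) := by
  rw [qbinom, qbinom, show j+d+1-j = d+1 by omega, show j+d-j = d by omega,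
    qfact_succ Q (j+d), qfact_succ Q d]
  have h1 := qfact_ne_zero Q HQ j
  have h2 := qfact_ne_zero Q HQ d
  have h3 := qintN_ne_zero Q HQ (d+1) (by omega)
  have h4 := qintN_ne_zero Q HQ (j+d+1) (by omega)
  field_simp

lemma NPO_of (q : ℝ) (hq : 0 < q) (hq1 : q ≠ 1) : NPO q := by
  intro s hs
  rcases hq1.lt_or_gt with h1 | h1
  · exact ne_of_lt (pow_lt_one₀ hq.le h1 hs.ne')
  · exact ne_of_gt (one_lt_pow₀ h1 hs.ne')

lemma NPO_pow (q : ℝ) (hq : 0 < q) (hq1 : q ≠ 1) (m : ℕ) (hm : 0 < m) : NPO (q ^ m) := by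
  intro s hs
  rw [← pow_mul]
  exact NPO_of q hq hq1 (m * s) (by positivity)

lemma qintN_factor (q : ℝ) (hq : 0 < q) (hq1 : q ≠ 1) (m : ℕ) (hm : 0 < m) (s : ℕ) :
    qintN q (s * m) = qintN (q ^ m) s * qintN q m := by
  have h1 := Qone_ne q (NPO_of q hq hq1)
  have h2 := Qone_ne (q ^ m) (NPO_pow q hq hq1 m hm)
  simp only [qintN]
  field_simp
  ring

/-- The sum in the explicit formula, with natural-number `q`-integers. -/
noncomputable def SsumN (q : ℝ) (m r : ℕ) (n k : ℕ) : ℝ :=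
  ∑ j ∈ Finset.range (k + 1),
    (-1 : ℝ) ^ (k - j) * q ^ (m * Nat.choose (k - j) 2) * qbinom (q ^ m) k j *
      ∏ i ∈ Finset.range n, qintN q (2 * r + j * m + i * m)

lemma Srec (q : ℝ) (hq : 0 < q) (hq1 : q ≠ 1) (m r : ℕ) (hm : 0 < m) (n k : ℕ) :
    SsumN q m r (n+1) (k+1)
      = q ^ (2*r + m*k + m*n) * (qintN (q^m) (k+1) * qintN q m) * SsumN q m r n k
        + qintN q (2*r + (k+1)*m + n*m) * SsumN q m r n (k+1) := by
  have HQ := NPO_of q hq hq1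
  have HQm := NPO_pow q hq hq1 m hm
  have h1 : SsumN q m r (n+1) (k+1) - qintN q (2*r + (k+1)*m + n*m) * SsumN q m r n (k+1)
      = ∑ j ∈ Finset.range (k+2),
          ((-1 : ℝ) ^ (k+1-j) * q ^ (m * Nat.choose (k+1-j) 2) * qbinom (q^m) (k+1) j *
            ∏ i ∈ Finset.range n, qintN q (2 * r + j * m + i * m)) *
          (qintN q (2*r + j*m + n*m) - qintN q (2*r + (k+1)*m + n*m)) := by
    rw [SsumN, SsumN, Finset.mul_sum, ← Finset.sum_sub_distrib]
    apply Finset.sum_congr rfl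
    intro j hj
    rw [Finset.prod_range_succ]
    ring
  have h2 : ∑ j ∈ Finset.range (k+2),
          ((-1 : ℝ) ^ (k+1-j) * q ^ (m * Nat.choose (k+1-j) 2) * qbinom (q^m) (k+1) j *
            ∏ i ∈ Finset.range n, qintN q (2 * r + j * m + i * m)) *
          (qintN q (2*r + j*m + n*m) - qintN q (2*r + (k+1)*m + n*m))
      = q ^ (2*r + m*k + m*n) * (qintN (q^m) (k+1) * qintN q m) * SsumN q m r n k := by
    rw [Finset.sum_range_succ, show 2*r + (k+1)*m + n*m = 2*r + (k+1)*m + n*m from rfl]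
    rw [sub_self, mul_zero, add_zero]
    rw [SsumN, Finset.mul_sum]
    apply Finset.sum_congr rfl
    intro j hj
    rw [Finset.mem_range] at hj
    obtain ⟨d, rfl⟩ : ∃ d, k = j + d := ⟨k - j, by omega⟩
    rw [show j + d + 1 - j = d + 1 by omega, show j + d - j = d by omega]
    have hdiff : qintN q (2*r + j*m + n*m) - qintN q (2*r + (j+d+1)*m + n*m)
        = -(q^(2*r + j*m + n*m) * (qintN (q^m) (d+1) * qintN q m)) := by
      rw [show 2*r + (j+d+1)*m + n*m = (2*r + j*m + n*m) + (d+1)*m by ring,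
        qintN_split q HQ (2*r + j*m + n*m) ((d+1)*m),
        qintN_factor q hq hq1 m hm (d+1)]
      ring
    rw [hdiff]
    rw [show Nat.choose (d+1) 2 = Nat.choose d 2 + d by
      simp [Nat.choose_succ_succ, Nat.choose_one_right, Nat.add_comm]]
    have hstep := qbinom_step (q^m) HQm j d
    linear_combination ((-1:ℝ)^d * q^(m*Nat.choose d 2) * q^(m*d) * q^(2*r + j*m + n*m)
      * qintN q m * ∏ i ∈ Finset.range n, qintN q (2*r + j*m + i*m)) * hstep
  linarith [h1, h2]

lemma Svanish (q : ℝ) (hq : 0 < q) (hq1 : q ≠ 1) (m r : ℕ) (hm : 0 < m) :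
    ∀ n k : ℕ, n < k → SsumN q m r n k = 0 := by
  have HQm := NPO_pow q hq hq1 m hm
  intro n
  induction n with
  | zero =>
      intro k hk
      obtain ⟨t, rfl⟩ : ∃ t, k = t + 1 := ⟨k - 1, by omega⟩
      rw [SsumN]
      have hre := Finset.sum_range_reflect
        (fun i => (-1:ℝ)^i * (q^m)^(Nat.choose i 2) * qbinom (q^m) (t+1) i) (t+2)
      rw [show t + 1 + 1 = t + 2 from rfl]
      calc ∑ j ∈ Finset.range (t+2),
              (-1:ℝ)^(t+1-j) * q^(m * Nat.choose (t+1-j) 2) * qbinom (q^m) (t+1) j *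
                ∏ i ∈ Finset.range 0, qintN q (2*r + j*m + i*m)
          = ∑ j ∈ Finset.range (t+2),
              (fun i => (-1:ℝ)^i * (q^m)^(Nat.choose i 2) * qbinom (q^m) (t+1) i) (t+2-1-j) := by
            apply Finset.sum_congr rfl
            intro j hj
            rw [Finset.mem_range] at hj
            simp only
            rw [Finset.prod_range_zero, mul_one, show t+2-1-j = t+1-j by omega,
              ← qbinom_symm (q^m) (t+1) j (by omega), pow_mul]
        _ = 0 := by rw [hre]; exact gauss (q^m) HQm t
  | succ n ih =>
      intro k hk
      obtain ⟨t, rfl⟩ : ∃ t, k = t + 1 := ⟨k - 1, by omega⟩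
      rw [Srec q hq hq1 m r hm n t, ih t (by omega), ih (t+1) (by omega)]
      ring

lemma qLah_vanish (q : ℝ) (m r : ℕ) : ∀ n k : ℕ, n < k → qLah q m r n k = 0 := by
  intro n
  induction n with
  | zero =>
      intro k hk
      obtain ⟨t, rfl⟩ : ∃ t, k = t + 1 := ⟨k - 1, by omega⟩
      rfl
  | succ n ih =>
      intro k hk
      obtain ⟨t, rfl⟩ : ∃ t, k = t + 1 := ⟨k - 1, by omega⟩
      rw [qLah, ih t (by omega), ih (t+1) (by omega)]
      ring

lemma Tkey (q : ℝ) (hq : 0 < q) (hq1 : q ≠ 1) (m r : ℕ) (hm : 0 < m) :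
    ∀ n k : ℕ, k ≤ n →
      qLah q m r n k * (qfact (q^m) k * (qintN q m)^k) = SsumN q m r n k := by
  intro n
  induction n with
  | zero =>
      intro k hk
      interval_cases k
      show (1:ℝ) * _ = _
      rw [SsumN, Finset.sum_range_one]
      simp [qbinom, qfact]
  | succ n ih =>
      intro k hk
      match k with
      | 0 =>
          rw [qLah, qint_eq_qintN q _ (2*r + n*m) (by push_cast; ring)]
          rw [SsumN, Finset.sum_range_one, Finset.prod_range_succ,
            show 2*r + 0*m + n*m = 2*r + n*m by omega]
          have IH0 := ih 0 (Nat.zero_le n)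
          rw [SsumN, Finset.sum_range_one] at IH0
          simp only [qfact, pow_zero, mul_one] at IH0 ⊢
          linear_combination qintN q (2*r + n*m) * IH0
      | k + 1 =>
          rw [Srec q hq hq1 m r hm n k]
          rw [qLah, qint_eq_qintN q _ (2*r + (k+1)*m + n*m) (by push_cast; ring)]
          have IH1 := ih k (by omega)
          have IH2 : qLah q m r n (k+1) * (qfact (q^m) (k+1) * (qintN q m)^(k+1))
              = SsumN q m r n (k+1) := by
            rcases Nat.lt_or_ge n (k+1) with h | h
            · rw [qLah_vanish q m r n (k+1) h, Svanish q hq hq1 m r hm n (k+1) h, zero_mul]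
            · exact ih (k+1) h
          rw [← IH1, ← IH2, qfact_succ (q^m) k, pow_succ]
          ring

theorem qLah_explicit_formula (q : ℝ) (hq : 0 < q) (hq1 : q ≠ 1) (m r : ℕ) (hm : 0 < m) (hr : 0 < r)
    (n k : ℕ) (hkn : k ≤ n) :
    qLah q m r n k =
      1 / (qfact (q ^ m) k * (qint q m) ^ k) *
        ∑ j ∈ Finset.range (k + 1),
          (-1 : ℝ) ^ (k - j) * q ^ (m * Nat.choose (k - j) 2) * qbinom (q ^ m) k j *
            ∏ i ∈ Finset.range n, qint q (2 * r + j * m + i * m) := by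
  have HQm := NPO_pow q hq hq1 m hm
  have hsum : (∑ j ∈ Finset.range (k + 1),
      (-1 : ℝ) ^ (k - j) * q ^ (m * Nat.choose (k - j) 2) * qbinom (q ^ m) k j *
        ∏ i ∈ Finset.range n, qint q (2 * r + j * m + i * m)) = SsumN q m r n k := by
    rw [SsumN]
    apply Finset.sum_congr rfl
    intro j hj
    congr 1
  have hqm : qint q (m : ℤ) = qintN q m := qint_eq_qintN q _ m rfl
  rw [hsum, hqm, ← Tkey q hq hq1 m r hm n k hkn]
  have hD : qfact (q^m) k * (qintN q m)^k ≠ 0 :=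
    mul_ne_zero (qfact_ne_zero _ HQm k)
      (pow_ne_zero _ (qintN_ne_zero q (NPO_of q hq hq1) m hm))
  field_simp
  rw [mul_assoc, mul_div_assoc, div_self hD, mul_one]
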